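/- Let η > 0 and γ ≥ 0, and let x_z : ℝ → ℝ be differentiable with |x_z'(t)| ≤ γ for all t. Let x_c : ℝ → ℝ be twice differentiable and satisfy the LIP dynamics x_c''(t) = η²(x_c(t) − x_z(t)) for all t ≥ t₀. If the initial state satisfies the stability condition x_c(t₀) + x_c'(t₀)/η = η ∫_{t₀}^∞ e^{−η(τ−t₀)} x_z(τ) dτ, then the CoM trajectory is bounded with respect to the ZMP trajectory: sup_{t ≥ t₀} |x_c(t) − x_z(t)| < ∞ (internal stability). -/

import Mathlib

open MeasureTheory Real Set Filter Topology

lemma tendsto_exp_decay (η t : ℝ) (hη : 0 < η) :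
    Tendsto (fun τ => Real.exp (-η * (τ - t))) atTop (𝓝 0) := by
  have h1 : Tendsto (fun τ : ℝ => η * (τ - t)) atTop atTop :=
    (tendsto_atTop_add_const_right _ (-t) tendsto_id).const_mul_atTop hη
  exact (Real.tendsto_exp_neg_atTop_nhds_zero.comp h1).congr fun τ => by
    simp [Function.comp, neg_mul]

lemma tendsto_lin_exp_decay (η t : ℝ) (hη : 0 < η) :
    Tendsto (fun τ => (τ - t) * Real.exp (-η * (τ - t))) atTop (𝓝 0) := by
  have h1 : Tendsto (fun τ : ℝ => η * (τ - t)) atTop atTop :=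
    (tendsto_atTop_add_const_right _ (-t) tendsto_id).const_mul_atTop hη
  have h2 := (tendsto_pow_mul_exp_neg_atTop_nhds_zero 1).comp h1
  have h3 := h2.const_mul (1/η)
  rw [mul_zero] at h3
  refine h3.congr fun τ => ?_
  have hne : η ≠ 0 := ne_of_gt hη
  simp only [Function.comp, pow_one]
  field_simp

lemma hasDerivAt_exp_decay (η t : ℝ) (hη : 0 < η) (x : ℝ) :
    HasDerivAt (fun τ => -(Real.exp (-η * (τ - t))) / η)
      (Real.exp (-η * (x - t))) x := by
  have h0 : HasDerivAt (fun τ : ℝ => -η * (τ - t)) (-η) x := by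
    simpa using ((hasDerivAt_id x).sub_const t).const_mul (-η)
  have h1 := (h0.exp).div_const η
  have h2 := h1.neg
  have hne : η ≠ 0 := ne_of_gt hη
  rw [show (fun τ => -(Real.exp (-η * (τ - t))) / η) = -fun τ => Real.exp (-η * (τ - t)) / η from by funext τ; simp [neg_div]]
  refine h2.congr_deriv ?_
  rw [mul_neg, neg_div, neg_neg, mul_div_assoc, div_self hne, mul_one]

lemma exp_decay_integrableOn (η t : ℝ) (hη : 0 < η) :
    IntegrableOn (fun τ => Real.exp (-η * (τ - t))) (Set.Ioi t) := by
  have hd : ∀ x ∈ Ici t, HasDerivAt (fun τ => -(Real.exp (-η * (τ - t))) / η)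
      (Real.exp (-η * (x - t))) x := fun x _ => hasDerivAt_exp_decay η t hη x
  have hl : Tendsto (fun τ => -(Real.exp (-η * (τ - t))) / η) atTop (𝓝 0) := by
    have := (tendsto_exp_decay η t hη).const_mul (-(1/η))
    rw [mul_zero] at this
    exact this.congr fun τ => by ring
  exact integrableOn_Ioi_deriv_of_nonneg' hd (fun x _ => (Real.exp_pos _).le) hl

lemma exp_decay_integral (η t : ℝ) (hη : 0 < η) :
    ∫ τ in Set.Ioi t, Real.exp (-η * (τ - t)) = 1 / η := by
  have hd : ∀ x ∈ Ici t, HasDerivAt (fun τ => -(Real.exp (-η * (τ - t))) / η)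
      (Real.exp (-η * (x - t))) x := fun x _ => hasDerivAt_exp_decay η t hη x
  have hl : Tendsto (fun τ => -(Real.exp (-η * (τ - t))) / η) atTop (𝓝 0) := by
    have := (tendsto_exp_decay η t hη).const_mul (-(1/η))
    rw [mul_zero] at this
    exact this.congr fun τ => by ring
  rw [integral_Ioi_of_hasDerivAt_of_tendsto' hd (exp_decay_integrableOn η t hη) hl]
  simp
  ring

lemma hasDerivAt_lin_exp_decay (η t : ℝ) (hη : 0 < η) (x : ℝ) :
    HasDerivAt (fun τ => -((τ - t) / η + 1 / η ^ 2) * Real.exp (-η * (τ - t)))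
      ((x - t) * Real.exp (-η * (x - t))) x := by
  have h0 : HasDerivAt (fun τ : ℝ => -η * (τ - t)) (-η) x := by
    simpa using ((hasDerivAt_id x).sub_const t).const_mul (-η)
  have hA : HasDerivAt (fun τ : ℝ => -((τ - t) / η + 1 / η ^ 2)) (-(1/η)) x := by
    exact ((((hasDerivAt_id x).sub_const t).div_const η).add_const (1/η^2)).neg
  have h2 := hA.mul h0.exp
  refine h2.congr_deriv ?_
  have hne : η ≠ 0 := ne_of_gt hη
  field_simp
  ring

lemma tendsto_lin_exp_decay' (η t : ℝ) (hη : 0 < η) :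
    Tendsto (fun τ => -((τ - t) / η + 1 / η ^ 2) * Real.exp (-η * (τ - t))) atTop (𝓝 0) := by
  have h1 := (tendsto_lin_exp_decay η t hη).const_mul (-(1/η))
  have h2 := (tendsto_exp_decay η t hη).const_mul (-(1/η^2))
  have := h1.add h2
  rw [mul_zero, mul_zero, add_zero] at this
  exact this.congr fun τ => by ring

lemma lin_exp_decay_integrableOn (η t : ℝ) (hη : 0 < η) :
    IntegrableOn (fun τ => (τ - t) * Real.exp (-η * (τ - t))) (Set.Ioi t) := by
  refine integrableOn_Ioi_deriv_of_nonneg'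
    (fun x _ => hasDerivAt_lin_exp_decay η t hη x)
    (fun x hx => mul_nonneg (by have := mem_Ioi.mp hx; linarith) (Real.exp_pos _).le)
    (tendsto_lin_exp_decay' η t hη)

lemma lin_exp_decay_integral (η t : ℝ) (hη : 0 < η) :
    ∫ τ in Set.Ioi t, (τ - t) * Real.exp (-η * (τ - t)) = 1 / η ^ 2 := by
  rw [integral_Ioi_of_hasDerivAt_of_tendsto'
    (fun x _ => hasDerivAt_lin_exp_decay η t hη x)
    (lin_exp_decay_integrableOn η t hη) (tendsto_lin_exp_decay' η t hη)]
  simp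

lemma const_of_deriv0 {F : ℝ → ℝ} {t₀ t : ℝ} (ht : t₀ ≤ t)
    (h : ∀ x ∈ Set.Icc t₀ t, HasDerivAt F 0 x) : F t = F t₀ := by
  have h2 : ∀ x ∈ Set.uIcc t₀ t, HasDerivAt F 0 x := by
    rwa [Set.uIcc_of_le ht]
  have := intervalIntegral.integral_eq_sub_of_hasDerivAt h2
    (intervalIntegrable_const)
  simp at this
  linarith

set_option maxHeartbeats 1000000 in
/-- If the LIP dynamics `x_c'' = η²(x_c − x_z)` holds for `t ≥ t₀`, the ZMP
input `x_z` has derivative bounded by `γ`, and the initial state satisfies the stability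
condition `x_c(t₀) + x_c'(t₀)/η = η ∫_{t₀}^∞ e^{−η(τ−t₀)} x_z(τ) dτ`, then the CoM is
bounded with respect to the ZMP: `sup_{t ≥ t₀} |x_c(t) − x_z(t)| < ∞`. -/
theorem stmt_0 (η γ t₀ : ℝ) (hη : 0 < η) (hγ : 0 ≤ γ)
    (xz xc : ℝ → ℝ)
    (hxz : Differentiable ℝ xz) (hxz' : ∀ t, |deriv xz t| ≤ γ)
    (hxc : Differentiable ℝ xc)
    (hode : ∀ t, t₀ ≤ t → HasDerivAt (deriv xc) (η ^ 2 * (xc t - xz t)) t)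
    (hinit : xc t₀ + deriv xc t₀ / η
        = η * ∫ τ in Set.Ioi t₀, Real.exp (-η * (τ - t₀)) * xz τ) :
    ∃ M : ℝ, ∀ t, t₀ ≤ t → |xc t - xz t| ≤ M := by
  have hne : η ≠ 0 := ne_of_gt hη
  set u : ℝ → ℝ := fun t => xc t + deriv xc t / η with hu_def
  set sf : ℝ → ℝ := fun t => xc t - deriv xc t / η with hsf_def
  -- Lipschitz bound on xz
  have hlip : ∀ a b : ℝ, |xz a - xz b| ≤ γ * |a - b| := by
    intro a b
    have := convex_univ.norm_image_sub_le_of_norm_deriv_le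
      (f := xz) (fun x _ => hxz x) (fun x _ => hxz' x) (Set.mem_univ b) (Set.mem_univ a)
    simpa [Real.norm_eq_abs] using this
  -- derivatives of u and sf
  have hu' : ∀ x, t₀ ≤ x → HasDerivAt u (η * (u x - xz x)) x := by
    intro x hx
    have h1 := (hxc x).hasDerivAt
    have h2 := (hode x hx).div_const η
    have h3 := h1.add h2
    refine h3.congr_deriv ?_
    simp only [hu_def]
    field_simp
    ring
  have hs' : ∀ x, t₀ ≤ x → HasDerivAt sf (-η * (sf x - xz x)) x := by
    intro x hx
    have h1 := (hxc x).hasDerivAt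
    have h2 := (hode x hx).div_const η
    have h3 := h1.sub h2
    refine h3.congr_deriv ?_
    simp only [hsf_def]
    field_simp
    ring
  set f : ℝ → ℝ := fun τ => Real.exp (-η * (τ - t₀)) * xz τ with hf_def
  have hfc : Continuous f := by
    apply Continuous.mul _ hxz.continuous
    exact Real.continuous_exp.comp (by continuity)
  -- integrability of f on Ioi t₀
  have hfint : MeasureTheory.IntegrableOn f (Set.Ioi t₀) := by
    have hgint : MeasureTheory.IntegrableOn
        (fun τ => |xz t₀| * Real.exp (-η * (τ - t₀)) + γ * ((τ - t₀) * Real.exp (-η * (τ - t₀))))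
        (Set.Ioi t₀) :=
      ((exp_decay_integrableOn η t₀ hη).const_mul _).add
        ((lin_exp_decay_integrableOn η t₀ hη).const_mul γ)
    refine hgint.mono' (hfc.aestronglyMeasurable) ?_
    rw [MeasureTheory.ae_restrict_iff' measurableSet_Ioi]
    filter_upwards with τ hτ
    have hτ' : t₀ < τ := hτ
    have hb : |xz τ| ≤ |xz t₀| + γ * (τ - t₀) := by
      have h1 := hlip τ t₀
      have h2 : |xz τ| - |xz t₀| ≤ |xz τ - xz t₀| := by
        have := abs_sub_abs_le_abs_sub (xz τ) (xz t₀); linarith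
      rw [abs_of_pos (by linarith : (0:ℝ) < τ - t₀)] at h1
      linarith
    have hepos := (Real.exp_pos (-η * (τ - t₀))).le
    calc ‖f τ‖ = Real.exp (-η * (τ - t₀)) * |xz τ| := by
          simp only [hf_def, Real.norm_eq_abs, abs_mul, Real.abs_exp]
      _ ≤ Real.exp (-η * (τ - t₀)) * (|xz t₀| + γ * (τ - t₀)) := by
          exact mul_le_mul_of_nonneg_left hb hepos
      _ = |xz t₀| * Real.exp (-η * (τ - t₀)) + γ * ((τ - t₀) * Real.exp (-η * (τ - t₀))) := by
          ring
  -- unstable part formula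
  have hkey : ∀ t, t₀ ≤ t →
      u t = η * ∫ τ in Set.Ioi t, Real.exp (-η * (τ - t)) * xz τ := by
    intro t ht
    have hFconst : Real.exp (-η * (t - t₀)) * u t + η * ∫ τ in t₀..t, f τ = u t₀ := by
      have hcc := const_of_deriv0
        (F := fun y => Real.exp (-η * (y - t₀)) * u y + η * ∫ τ in t₀..y, f τ) ht ?_
      · simpa using hcc
      · intro x hx
        have hx0 : t₀ ≤ x := hx.1
        have h0 : HasDerivAt (fun y : ℝ => -η * (y - t₀)) (-η) x := by
          simpa using ((hasDerivAt_id x).sub_const t₀).const_mul (-η)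
        have hE := h0.exp
        have hI : HasDerivAt (fun y => ∫ τ in t₀..y, f τ) (f x) x :=
          intervalIntegral.integral_hasDerivAt_right (hfc.intervalIntegrable _ _)
            (hfc.stronglyMeasurableAtFilter _ _) hfc.continuousAt
        have hsum := (hE.mul (hu' x hx0)).add (hI.const_mul η)
        refine hsum.congr_deriv ?_
        simp only [hf_def]
        ring
    have hsplit : ∫ τ in Set.Ioi t₀, f τ
        = (∫ τ in Set.Ioc t₀ t, f τ) + ∫ τ in Set.Ioi t, f τ := by
      rw [← MeasureTheory.setIntegral_union (Set.Ioc_disjoint_Ioi le_rfl) measurableSet_Ioi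
        (hfint.mono_set Set.Ioc_subset_Ioi_self) (hfint.mono_set (Set.Ioi_subset_Ioi ht)),
        Set.Ioc_union_Ioi_eq_Ioi ht]
    have hIoc : ∫ τ in t₀..t, f τ = ∫ τ in Set.Ioc t₀ t, f τ :=
      intervalIntegral.integral_of_le ht
    have hinit' : u t₀ = η * ∫ τ in Set.Ioi t₀, f τ := hinit
    have h1 : Real.exp (-η * (t - t₀)) * u t = η * ∫ τ in Set.Ioi t, f τ := by
      rw [hIoc] at hFconst
      rw [hsplit, mul_add] at hinit'
      linarith
    have hEinv : Real.exp (η * (t - t₀)) * Real.exp (-η * (t - t₀)) = 1 := by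
      rw [← Real.exp_add]
      norm_num
    calc u t = Real.exp (η * (t - t₀)) * (Real.exp (-η * (t - t₀)) * u t) := by
          rw [← mul_assoc, hEinv, one_mul]
      _ = Real.exp (η * (t - t₀)) * (η * ∫ τ in Set.Ioi t, f τ) := by rw [h1]
      _ = η * ∫ τ in Set.Ioi t, Real.exp (η * (t - t₀)) * f τ := by
          rw [MeasureTheory.integral_const_mul]; ring
      _ = η * ∫ τ in Set.Ioi t, Real.exp (-η * (τ - t)) * xz τ := by
          congr 1
          refine MeasureTheory.setIntegral_congr_fun measurableSet_Ioi fun τ _ => ?_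
          simp only [hf_def]
          rw [← mul_assoc, ← Real.exp_add]
          congr 2
          ring
  -- unstable bound
  have hbu : ∀ t, t₀ ≤ t → |u t - xz t| ≤ γ / η := by
    intro t ht
    have hg1int := exp_decay_integrableOn η t hη
    have hg2int : MeasureTheory.IntegrableOn
        (fun τ => Real.exp (-η * (τ - t)) * xz τ) (Set.Ioi t) := by
      have h2 : MeasureTheory.IntegrableOn (fun τ => Real.exp (η * (t - t₀)) * f τ)
          (Set.Ioi t) :=
        (hfint.mono_set (Set.Ioi_subset_Ioi ht)).const_mul (Real.exp (η * (t - t₀)))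
      refine h2.congr_fun (fun τ _ => ?_) measurableSet_Ioi
      simp only [hf_def]
      rw [← mul_assoc, ← Real.exp_add]
      congr 2
      ring
    have hxzt : η * ∫ τ in Set.Ioi t, Real.exp (-η * (τ - t)) * xz t = xz t := by
      rw [MeasureTheory.integral_mul_const, exp_decay_integral η t hη]
      field_simp
    have hsub : ∫ τ in Set.Ioi t, Real.exp (-η * (τ - t)) * (xz τ - xz t)
        = (∫ τ in Set.Ioi t, Real.exp (-η * (τ - t)) * xz τ)
          - ∫ τ in Set.Ioi t, Real.exp (-η * (τ - t)) * xz t := by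
      rw [← MeasureTheory.integral_sub hg2int (hg1int.mul_const (xz t))]
      exact MeasureTheory.integral_congr_ae (Filter.Eventually.of_forall fun τ => by ring)
    have hdiff : u t - xz t
        = η * ∫ τ in Set.Ioi t, Real.exp (-η * (τ - t)) * (xz τ - xz t) := by
      rw [hsub, mul_sub, hxzt, ← hkey t ht]
    rw [hdiff, abs_mul, abs_of_pos hη]
    have hbound : |∫ τ in Set.Ioi t, Real.exp (-η * (τ - t)) * (xz τ - xz t)|
        ≤ γ * (1 / η ^ 2) := by
      have hb := MeasureTheory.norm_integral_le_of_norm_le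
        (f := fun τ => Real.exp (-η * (τ - t)) * (xz τ - xz t))
        (g := fun τ => γ * ((τ - t) * Real.exp (-η * (τ - t))))
        ((lin_exp_decay_integrableOn η t hη).const_mul γ) ?_
      · rw [Real.norm_eq_abs] at hb
        rwa [MeasureTheory.integral_const_mul, lin_exp_decay_integral η t hη] at hb
      · rw [MeasureTheory.ae_restrict_iff' measurableSet_Ioi]
        filter_upwards with τ hτ
        have hτ' : t < τ := hτ
        have h1 := hlip τ t
        rw [abs_of_pos (by linarith : (0:ℝ) < τ - t)] at h1
        have hepos := (Real.exp_pos (-η * (τ - t))).le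
        calc ‖Real.exp (-η * (τ - t)) * (xz τ - xz t)‖
            = Real.exp (-η * (τ - t)) * |xz τ - xz t| := by
              rw [Real.norm_eq_abs, abs_mul, Real.abs_exp]
          _ ≤ Real.exp (-η * (τ - t)) * (γ * (τ - t)) :=
              mul_le_mul_of_nonneg_left h1 hepos
          _ = γ * ((τ - t) * Real.exp (-η * (τ - t))) := by ring
    calc η * |∫ τ in Set.Ioi t, Real.exp (-η * (τ - t)) * (xz τ - xz t)|
        ≤ η * (γ * (1 / η ^ 2)) := mul_le_mul_of_nonneg_left hbound hη.le
      _ = γ / η := by field_simp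
  -- stable bound
  have hgc : Continuous (fun τ => Real.exp (η * (τ - t₀)) * xz τ) := by
    apply Continuous.mul _ hxz.continuous
    exact Real.continuous_exp.comp (by continuity)
  have hec : Continuous (fun τ : ℝ => Real.exp (η * (τ - t₀))) :=
    Real.continuous_exp.comp (by continuity)
  have hbs : ∀ t, t₀ ≤ t → |sf t - xz t| ≤ |sf t₀ - xz t₀| + 2 * (γ / η) := by
    intro t ht
    have hΔ0 : (0:ℝ) ≤ t - t₀ := by linarith
    set E := Real.exp (-η * (t - t₀)) with hE_def
    set T := Real.exp (η * (t - t₀)) with hT_def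
    have hEE : E * T = 1 := by
      rw [hE_def, hT_def, ← Real.exp_add]
      norm_num
    have hE0 : 0 < E := Real.exp_pos _
    have hE1 : E ≤ 1 := Real.exp_le_one_iff.mpr (by nlinarith)
    -- constancy of the stable combination
    have hGconst : T * sf t - η * (∫ τ in t₀..t, Real.exp (η * (τ - t₀)) * xz τ) = sf t₀ := by
      have hcc := const_of_deriv0
        (F := fun y => Real.exp (η * (y - t₀)) * sf y
          - η * ∫ τ in t₀..y, Real.exp (η * (τ - t₀)) * xz τ) ht ?_
      · simpa using hcc
      · intro x hx
        have h0 : HasDerivAt (fun y : ℝ => η * (y - t₀)) η x := by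
          simpa using ((hasDerivAt_id x).sub_const t₀).const_mul η
        have hE' := h0.exp
        have hI : HasDerivAt (fun y => ∫ τ in t₀..y, Real.exp (η * (τ - t₀)) * xz τ)
            (Real.exp (η * (x - t₀)) * xz x) x :=
          intervalIntegral.integral_hasDerivAt_right (hgc.intervalIntegrable _ _)
            (hgc.stronglyMeasurableAtFilter _ _) hgc.continuousAt
        have hsum := (hE'.mul (hs' x hx.1)).sub (hI.const_mul η)
        refine hsum.congr_deriv ?_
        ring
    -- two FTC integrals
    have hI1 : ∫ τ in t₀..t, Real.exp (η * (τ - t₀)) = (T - 1) / η := by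
      have hd : ∀ x ∈ Set.uIcc t₀ t,
          HasDerivAt (fun τ => Real.exp (η * (τ - t₀)) / η) (Real.exp (η * (x - t₀))) x := by
        intro x _
        have h0 : HasDerivAt (fun y : ℝ => η * (y - t₀)) η x := by
          simpa using ((hasDerivAt_id x).sub_const t₀).const_mul η
        have h1 := h0.exp.div_const η
        refine h1.congr_deriv ?_
        field_simp
      rw [intervalIntegral.integral_eq_sub_of_hasDerivAt hd (hec.intervalIntegrable _ _)]
      rw [hT_def]
      simp
      ring
    have hI2 : ∫ τ in t₀..t, Real.exp (η * (τ - t₀)) * (t - τ)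
        = T / η ^ 2 - (t - t₀) / η - 1 / η ^ 2 := by
      have hd : ∀ x ∈ Set.uIcc t₀ t,
          HasDerivAt (fun τ => Real.exp (η * (τ - t₀)) * ((t - τ) / η + 1 / η ^ 2))
            (Real.exp (η * (x - t₀)) * (t - x)) x := by
        intro x _
        have h0 : HasDerivAt (fun y : ℝ => η * (y - t₀)) η x := by
          simpa using ((hasDerivAt_id x).sub_const t₀).const_mul η
        have hA : HasDerivAt (fun τ : ℝ => (t - τ) / η + 1 / η ^ 2) (-1 / η) x :=
          (((hasDerivAt_id x).const_sub t).div_const η).add_const (1 / η ^ 2)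
        have h1 := h0.exp.mul hA
        refine h1.congr_deriv ?_
        field_simp
        ring
      rw [intervalIntegral.integral_eq_sub_of_hasDerivAt hd
        ((hec.mul (continuous_const.sub continuous_id)).intervalIntegrable _ _)]
      rw [hT_def]
      simp
      field_simp
      ring
    -- key identity for the stable part
    have hsplit : ∫ τ in t₀..t, Real.exp (η * (τ - t₀)) * (xz τ - xz t)
        = (∫ τ in t₀..t, Real.exp (η * (τ - t₀)) * xz τ)
          - (∫ τ in t₀..t, Real.exp (η * (τ - t₀))) * xz t := by
      rw [← intervalIntegral.integral_mul_const,
        ← intervalIntegral.integral_sub (hgc.intervalIntegrable _ _)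
          ((hec.intervalIntegrable t₀ t).mul_const (xz t))]
      exact intervalIntegral.integral_congr fun τ _ => by ring
    have hid : sf t - xz t = E * (sf t₀ - xz t)
        + η * E * (∫ τ in t₀..t, Real.exp (η * (τ - t₀)) * (xz τ - xz t)) := by
      have hI1' : η * ∫ τ in t₀..t, Real.exp (η * (τ - t₀)) = T - 1 := by
        rw [hI1]; field_simp
      rw [hsplit]
      linear_combination E * hGconst + (E * xz t) * hI1' + (-(sf t - xz t)) * hEE
    -- bound the first term
    have hb1 : |E * (sf t₀ - xz t)| ≤ |sf t₀ - xz t₀| + γ / η := by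
      have h1 : |sf t₀ - xz t| ≤ |sf t₀ - xz t₀| + γ * (t - t₀) := by
        have h2 := hlip t₀ t
        rw [abs_sub_comm t₀ t, abs_of_nonneg hΔ0] at h2
        calc |sf t₀ - xz t| = |(sf t₀ - xz t₀) + (xz t₀ - xz t)| := by ring_nf
          _ ≤ |sf t₀ - xz t₀| + |xz t₀ - xz t| := abs_add_le _ _
          _ ≤ |sf t₀ - xz t₀| + γ * (t - t₀) := by linarith
      have hEΔ : E * (η * (t - t₀)) ≤ 1 := by
        have h3 := Real.add_one_le_exp (η * (t - t₀))
        have h4 : η * (t - t₀) ≤ T := by rw [hT_def]; linarith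
        calc E * (η * (t - t₀)) ≤ E * T := mul_le_mul_of_nonneg_left h4 hE0.le
          _ = 1 := hEE
      calc |E * (sf t₀ - xz t)| = E * |sf t₀ - xz t| := by
            rw [abs_mul, abs_of_pos hE0]
        _ ≤ E * (|sf t₀ - xz t₀| + γ * (t - t₀)) := mul_le_mul_of_nonneg_left h1 hE0.le
        _ = E * |sf t₀ - xz t₀| + (γ / η) * (E * (η * (t - t₀))) := by field_simp
        _ ≤ |sf t₀ - xz t₀| + γ / η := by
            have := abs_nonneg (sf t₀ - xz t₀)
            have hγη : 0 ≤ γ / η := div_nonneg hγ hη.le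
            nlinarith
    -- bound the second term
    have hb2 : |η * E * (∫ τ in t₀..t, Real.exp (η * (τ - t₀)) * (xz τ - xz t))| ≤ γ / η := by
      have habs : |∫ τ in t₀..t, Real.exp (η * (τ - t₀)) * (xz τ - xz t)|
          ≤ ∫ τ in t₀..t, γ * (Real.exp (η * (τ - t₀)) * (t - τ)) := by
        refine (intervalIntegral.abs_integral_le_integral_abs ht).trans ?_
        refine intervalIntegral.integral_mono_on ht
          ((hec.mul (hxz.continuous.sub continuous_const)).abs.intervalIntegrable _ _)
          ((continuous_const.mul (hec.mul (continuous_const.sub continuous_id))).intervalIntegrable _ _) ?_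
        intro τ hτ
        have h1 := hlip τ t
        rw [abs_sub_comm τ t, abs_of_nonneg (by linarith [hτ.2] : (0:ℝ) ≤ t - τ)] at h1
        have hepos := (Real.exp_pos (η * (τ - t₀))).le
        calc |Real.exp (η * (τ - t₀)) * (xz τ - xz t)|
            = Real.exp (η * (τ - t₀)) * |xz τ - xz t| := by
              rw [abs_mul, Real.abs_exp]
          _ ≤ Real.exp (η * (τ - t₀)) * (γ * (t - τ)) := mul_le_mul_of_nonneg_left h1 hepos
          _ = γ * (Real.exp (η * (τ - t₀)) * (t - τ)) := by ring
      rw [intervalIntegral.integral_const_mul, hI2] at habs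
      have hval : γ * (T / η ^ 2 - (t - t₀) / η - 1 / η ^ 2) ≤ γ * (T / η ^ 2) := by
        apply mul_le_mul_of_nonneg_left _ hγ
        have h5 : 0 ≤ (t - t₀) / η := div_nonneg hΔ0 hη.le
        have h6 : 0 ≤ 1 / η ^ 2 := by positivity
        linarith
      calc |η * E * (∫ τ in t₀..t, Real.exp (η * (τ - t₀)) * (xz τ - xz t))|
          = η * E * |∫ τ in t₀..t, Real.exp (η * (τ - t₀)) * (xz τ - xz t)| := by
            rw [abs_mul, abs_of_pos (by positivity : (0:ℝ) < η * E)]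
        _ ≤ η * E * (γ * (T / η ^ 2)) := by
            apply mul_le_mul_of_nonneg_left _ (by positivity : (0:ℝ) ≤ η * E)
            exact habs.trans hval
        _ = (γ / η) * (E * T) := by field_simp
        _ = γ / η := by rw [hEE, mul_one]
    rw [hid]
    calc |E * (sf t₀ - xz t) + η * E * (∫ τ in t₀..t, Real.exp (η * (τ - t₀)) * (xz τ - xz t))|
        ≤ |E * (sf t₀ - xz t)|
          + |η * E * (∫ τ in t₀..t, Real.exp (η * (τ - t₀)) * (xz τ - xz t))| := abs_add_le _ _
      _ ≤ |sf t₀ - xz t₀| + 2 * (γ / η) := by linarith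
  refine ⟨|sf t₀ - xz t₀| + 3 * (γ / η), fun t ht => ?_⟩
  have h1 := hbu t ht
  have h2 := hbs t ht
  have hx : xc t - xz t = ((u t - xz t) + (sf t - xz t)) / 2 := by
    simp only [hu_def, hsf_def]; ring
  rw [hx]
  have := abs_add_le (u t - xz t) (sf t - xz t)
  rw [abs_div]
  have hγη : 0 ≤ γ / η := div_nonneg hγ hη.le
  have h0 : 0 ≤ |sf t₀ - xz t₀| := abs_nonneg _
  calc |u t - xz t + (sf t - xz t)| / |(2:ℝ)|
      ≤ (|u t - xz t| + |sf t - xz t|) / 2 := by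
        rw [abs_two]; linarith
    _ ≤ _ := by linarith
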